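/- Let α ∈ (0,1], let μ be a probability distribution on the k-element subsets of [n] = {1,…,n}, and let p_i = (1/k)·∑_{S ∋ i} μ(S) be its single-element marginals. If the map (z₁,…,zₙ) ↦ log g_μ(z₁^α,…,zₙ^α) is concave on the positive orthant ℝ^n_{>0} (i.e., μ is α-fractionally log-concave), then for all (z₁,…,zₙ) ∈ ℝ^n_{≥0} one has g_μ(z₁,…,zₙ) ≤ (∑_{i=1}^n p_i z_i^{1/α})^{αk}. -/

import Mathlib

open Finset

/-- The generating polynomial `g_μ(z) = ∑_S μ(S) ∏_{i∈S} z_i`. -/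
noncomputable def genPoly {n : ℕ} (μ : Finset (Fin n) → ℝ) (z : Fin n → ℝ) : ℝ :=
  ∑ S : Finset (Fin n), μ S * ∏ i ∈ S, z i

/-- The `k → 1` down operator: `(ν D_{k→1})(i) = (1/k) ∑_{S ∋ i} ν(S)`. -/
noncomputable def down1 {n : ℕ} (k : ℕ) (ν : Finset (Fin n) → ℝ) (i : Fin n) : ℝ :=
  (1 / (k : ℝ)) * ∑ S ∈ Finset.univ.filter (fun S => i ∈ S), ν S

lemma swap_sum {n : ℕ} (g : Finset (Fin n) → ℝ) (f : Fin n → ℝ) :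
    ∑ S : Finset (Fin n), g S * ∑ i ∈ S, f i
      = ∑ i : Fin n, (∑ S ∈ Finset.univ.filter (fun S => i ∈ S), g S) * f i := by
  have h1 : ∀ S : Finset (Fin n), g S * ∑ i ∈ S, f i
      = ∑ i : Fin n, if i ∈ S then g S * f i else 0 := by
    intro S
    rw [Finset.mul_sum, Finset.sum_ite_mem, Finset.univ_inter]
  simp_rw [h1]
  rw [Finset.sum_comm]
  refine Finset.sum_congr rfl fun i _ => ?_
  rw [Finset.sum_mul, Finset.sum_filter]

lemma genPoly_pos {n : ℕ} (μ : Finset (Fin n) → ℝ) (hμ0 : ∀ S, 0 ≤ μ S)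
    (hμ1 : ∑ S : Finset (Fin n), μ S = 1)
    (y : Fin n → ℝ) (hy : ∀ i, 0 < y i) : 0 < genPoly μ y := by
  obtain ⟨S₀, -, hS₀⟩ := Finset.exists_ne_zero_of_sum_ne_zero (by rw [hμ1]; norm_num :
    ∑ S : Finset (Fin n), μ S ≠ 0)
  refine Finset.sum_pos' (fun S _ => mul_nonneg (hμ0 S) (Finset.prod_nonneg fun i _ => (hy i).le))
    ⟨S₀, Finset.mem_univ _, ?_⟩
  exact mul_pos ((hμ0 S₀).lt_of_ne (Ne.symm hS₀)) (Finset.prod_pos fun i _ => hy i)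

open Filter Topology in
lemma core_ineq (n k : ℕ) (α : ℝ) (hα0 : 0 < α)
    (μ : Finset (Fin n) → ℝ)
    (hμ0 : ∀ S, 0 ≤ μ S)
    (hμk : ∀ S, μ S ≠ 0 → S.card = k)
    (hμ1 : ∑ S : Finset (Fin n), μ S = 1)
    (hFLC : ConcaveOn ℝ {z : Fin n → ℝ | ∀ i, 0 < z i}
      (fun z => Real.log (genPoly μ (fun i => z i ^ α))))
    (hk : k ≠ 0)
    (x : Fin n → ℝ) (hx : ∀ i, 0 < x i)
    (hs : 0 < ∑ i : Fin n, down1 k μ i * x i) :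
    genPoly μ (fun i => x i ^ α) ≤ (∑ i : Fin n, down1 k μ i * x i) ^ (α * (k : ℝ)) := by
  set s : ℝ := ∑ i : Fin n, down1 k μ i * x i with hs_def
  set q : Fin n → ℝ := fun i => ∑ S ∈ Finset.univ.filter (fun S => i ∈ S), μ S with hq_def
  set d : Fin n → ℝ := fun i => x i - s with hd_def
  set G : ℝ → ℝ := fun t => ∑ S : Finset (Fin n), μ S * ∏ i ∈ S, (s + t * d i) ^ α with hG_def
  have hkR : (0:ℝ) < (k:ℝ) := by positivity
  -- q sums
  have hqsum : ∑ i : Fin n, q i = (k : ℝ) := by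
    have := swap_sum μ (fun _ => (1:ℝ))
    simp only [mul_one] at this
    rw [← this]
    have : ∀ S : Finset (Fin n), μ S * ∑ _i ∈ S, (1:ℝ) = μ S * (k:ℝ) := by
      intro S
      by_cases h : μ S = 0
      · simp [h]
      · simp [hμk S h]
    rw [Finset.sum_congr rfl fun S _ => this S, ← Finset.sum_mul, hμ1, one_mul]
  have hqx : ∑ i : Fin n, q i * x i = (k:ℝ) * s := by
    rw [hs_def]
    rw [Finset.mul_sum]
    refine Finset.sum_congr rfl fun i _ => ?_
    simp only [down1, hq_def]
    field_simp
  have hqd : ∑ i : Fin n, q i * d i = 0 := by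
    simp only [hd_def, mul_sub]
    rw [Finset.sum_sub_distrib, hqx]
    simp_rw [← Finset.sum_mul]
    rw [hqsum]
    ring
  -- G 0
  have hG0 : G 0 = s ^ (α * (k:ℝ)) := by
    have h1 : G 0 = ∑ S : Finset (Fin n), μ S * (s ^ α) ^ S.card := by
      simp [hG_def, Finset.prod_const]
    have h2 : ∀ S : Finset (Fin n), μ S * (s ^ α) ^ S.card = μ S * (s ^ α) ^ k := by
      intro S
      by_cases h : μ S = 0
      · simp [h]
      · rw [hμk S h]
    rw [h1, Finset.sum_congr rfl fun S _ => h2 S, ← Finset.sum_mul, hμ1, one_mul,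
      Real.rpow_mul hs.le, Real.rpow_natCast]
  have hG0pos : 0 < G 0 := by rw [hG0]; positivity
  -- derivative of each factor
  have hfac : ∀ i : Fin n, HasDerivAt (fun t : ℝ => (s + t * d i) ^ α)
      (α * s ^ (α - 1) * d i) 0 := by
    intro i
    have h1 : HasDerivAt (fun t : ℝ => s + t * d i) (d i) 0 := by
      simpa using ((hasDerivAt_id (0:ℝ)).mul_const (d i)).const_add s
    have h2 := h1.rpow_const (p := α) (Or.inl (by simp [hs.ne']))
    simpa using h2.congr_deriv (by simp; ring)
  -- derivative of G at 0
  have hprod : ∀ S : Finset (Fin n), HasDerivAt (fun t : ℝ => ∏ i ∈ S, (s + t * d i) ^ α)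
      (∑ i ∈ S, (∏ j ∈ S.erase i, (s + 0 * d j) ^ α) • (α * s ^ (α - 1) * d i)) 0 :=
    fun S => HasDerivAt.fun_finsetProd (fun i _ => hfac i)
  have hGd : HasDerivAt G
      (∑ S : Finset (Fin n), μ S * ∑ i ∈ S, (∏ j ∈ S.erase i, (s + 0 * d j) ^ α) • (α * s ^ (α - 1) * d i)) 0 :=
    HasDerivAt.fun_sum fun S _ => (hprod S).const_mul (μ S)
  have hder0 : (∑ S : Finset (Fin n), μ S * ∑ i ∈ S, (∏ j ∈ S.erase i, (s + 0 * d j) ^ α) • (α * s ^ (α - 1) * d i)) = 0 := by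
    have step : ∀ S : Finset (Fin n),
        μ S * ∑ i ∈ S, (∏ j ∈ S.erase i, (s + 0 * d j) ^ α) • (α * s ^ (α - 1) * d i)
        = ((s ^ α) ^ (k - 1) * (α * s ^ (α - 1))) * (μ S * ∑ i ∈ S, d i) := by
      intro S
      by_cases h : μ S = 0
      · simp [h]
      · have hcard := hμk S h
        have hfac2 : ∀ i ∈ S, (∏ j ∈ S.erase i, (s + 0 * d j) ^ α) • (α * s ^ (α - 1) * d i)
            = ((s ^ α) ^ (k - 1) * (α * s ^ (α - 1))) * d i := by
          intro i hi
          have : ∏ j ∈ S.erase i, (s + 0 * d j) ^ α = (s ^ α) ^ (k - 1) := by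
            simp only [zero_mul, add_zero, Finset.prod_const,
              Finset.card_erase_of_mem hi, hcard]
          rw [this]
          simp only [smul_eq_mul]; ring
        rw [Finset.sum_congr rfl hfac2, ← Finset.mul_sum]
        ring
    rw [Finset.sum_congr rfl fun S _ => step S, ← Finset.mul_sum, swap_sum μ d, hqd, mul_zero]
  have hGd0 : HasDerivAt G 0 0 := hGd.congr_deriv hder0
  -- derivative of log ∘ G at 0
  have hh : HasDerivAt (fun t => Real.log (G t)) 0 0 := by
    have := (Real.hasDerivAt_log hG0pos.ne').comp 0 hGd0
    exact this.congr_deriv (mul_zero _)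
  -- concavity gives slope bound
  set Fx : ℝ := Real.log (genPoly μ (fun i => x i ^ α)) with hFx_def
  have hconst_mem : (fun _ : Fin n => s) ∈ {z : Fin n → ℝ | ∀ i, 0 < z i} := fun _ => hs
  have hx_mem : x ∈ {z : Fin n → ℝ | ∀ i, 0 < z i} := hx
  have hslope_bd : ∀ t ∈ Set.Ioc (0:ℝ) 1,
      Fx - Real.log (G 0) ≤ slope (fun t => Real.log (G t)) 0 t := by
    intro t ht
    have hcc := hFLC.2 hconst_mem hx_mem
      (show (0:ℝ) ≤ 1 - t by linarith [ht.2]) ht.1.le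
      (show (1 - t) + t = 1 by ring)
    simp only [smul_eq_mul] at hcc
    have heq : (1 - t) • (fun _ : Fin n => s) + t • x = fun i => s + t * d i := by
      funext i
      simp only [Pi.add_apply, Pi.smul_apply, smul_eq_mul, hd_def]
      ring
    have hcc2 : (1 - t) * Real.log (G 0) + t * Fx ≤ Real.log (G t) := by
      have e1 : Real.log (G 0) = Real.log (genPoly μ fun _ => s ^ α) := by
        simp only [hG_def, zero_mul, add_zero]
        rfl
      have e2 : Real.log (G t)
          = Real.log (genPoly μ fun i => (((1 - t) • fun _ : Fin n => s) + t • x) i ^ α) := by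
        rw [heq]; rfl
      rw [e1, e2]
      exact hcc
    have ht0 : (0:ℝ) < t := ht.1
    rw [slope_def_field, sub_zero, le_div_iff₀ ht0]
    nlinarith [hcc2]
  have htends : Filter.Tendsto (slope (fun t => Real.log (G t)) 0) (𝓝[>] (0:ℝ)) (𝓝 0) :=
    (hasDerivAt_iff_tendsto_slope.mp hh).mono_left
      (nhdsWithin_mono 0 fun y hy => by simpa using ne_of_gt hy)
  have hFle : Fx - Real.log (G 0) ≤ 0 :=
    ge_of_tendsto htends (Filter.eventually_of_mem (Ioc_mem_nhdsGT one_pos) hslope_bd)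
  have hFx_le : Fx ≤ Real.log (s ^ (α * (k:ℝ))) := by rw [← hG0]; linarith
  have hgen_pos : 0 < genPoly μ (fun i => x i ^ α) :=
    genPoly_pos μ hμ0 hμ1 _ (fun i => Real.rpow_pos_of_pos (hx i) α)
  have hrhs_pos : (0:ℝ) < s ^ (α * (k:ℝ)) := by positivity
  exact (Real.log_le_log_iff hgen_pos hrhs_pos).mp hFx_le

open Filter Topology in
theorem stmt_0 (n k : ℕ) (α : ℝ) (hα0 : 0 < α) (hα1 : α ≤ 1)
    (μ : Finset (Fin n) → ℝ)
    (hμ0 : ∀ S, 0 ≤ μ S)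
    (hμk : ∀ S, μ S ≠ 0 → S.card = k)
    (hμ1 : ∑ S : Finset (Fin n), μ S = 1)
    (hFLC : ConcaveOn ℝ {z : Fin n → ℝ | ∀ i, 0 < z i}
      (fun z => Real.log (genPoly μ (fun i => z i ^ α)))) :
    ∀ z : Fin n → ℝ, (∀ i, 0 ≤ z i) →
      genPoly μ z ≤ (∑ i : Fin n, down1 k μ i * z i ^ (1 / α)) ^ (α * (k : ℝ)) := by
  intro z hz
  rcases Nat.eq_zero_or_pos k with hk0 | hkpos
  · subst hk0
    have h1 : ∀ S : Finset (Fin n), μ S * ∏ i ∈ S, z i = μ S := by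
      intro S
      by_cases h : μ S = 0
      · simp [h]
      · rw [Finset.card_eq_zero.mp (hμk S h)]; simp
    have hgen : genPoly μ z = 1 := by
      unfold genPoly
      rw [Finset.sum_congr rfl fun S _ => h1 S, hμ1]
    simp [hgen]
  · have hk : k ≠ 0 := hkpos.ne'
    have hp0 : ∀ i, 0 ≤ down1 k μ i := fun i =>
      mul_nonneg (by positivity) (Finset.sum_nonneg fun S _ => hμ0 S)
    set s0 : ℝ := ∑ i : Fin n, down1 k μ i * z i ^ (1/α) with hs0
    have hs0nn : (0:ℝ) ≤ s0 := Finset.sum_nonneg fun i _ =>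
      mul_nonneg (hp0 i) (Real.rpow_nonneg (hz i) _)
    rcases hs0nn.eq_or_lt with hzero | hpos
    · have hterm : ∀ i, down1 k μ i * z i ^ (1/α) = 0 := by
        intro i
        have h2 := (Finset.sum_eq_zero_iff_of_nonneg (fun i _ =>
          mul_nonneg (hp0 i) (Real.rpow_nonneg (hz i) _))).mp hzero.symm
        exact h2 i (Finset.mem_univ i)
      have hlhs : genPoly μ z = 0 := by
        unfold genPoly
        refine Finset.sum_eq_zero fun S _ => ?_
        by_cases h : μ S = 0
        · simp [h]
        · have hcard := hμk S h
          have hne : S.Nonempty := Finset.card_pos.mp (by rw [hcard]; exact hkpos)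
          obtain ⟨i, hi⟩ := hne
          have hpi : 0 < down1 k μ i := by
            apply mul_pos (by positivity)
            refine Finset.sum_pos' (fun T _ => hμ0 T) ⟨S, ?_, (hμ0 S).lt_of_ne (Ne.symm h)⟩
            simp [hi]
          have hzi : z i = 0 := by
            have h2 := hterm i
            have h3 : z i ^ (1/α) = 0 := by
              rcases mul_eq_zero.mp h2 with h4 | h4
              · exact absurd h4 hpi.ne'
              · exact h4
            exact (Real.rpow_eq_zero (hz i) (by positivity)).mp h3
          rw [Finset.prod_eq_zero hi hzi, mul_zero]
      rw [hlhs, ← hzero, Real.zero_rpow (by positivity : (0:ℝ) < α * (k:ℝ)).ne']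
    · have key : ∀ ε : ℝ, 0 < ε →
          genPoly μ z ≤ (∑ i : Fin n, down1 k μ i * (z i + ε) ^ (1/α)) ^ (α * (k:ℝ)) := by
        intro ε hε
        set x : Fin n → ℝ := fun i => (z i + ε) ^ (1/α) with hx_def
        have hxpos : ∀ i, 0 < x i := fun i => Real.rpow_pos_of_pos (by linarith [hz i]) _
        have hxα : (fun i => x i ^ α) = fun i => z i + ε := by
          funext i
          rw [hx_def]
          simp only [one_div]
          exact Real.rpow_inv_rpow (by linarith [hz i]) hα0.ne'
        have hxs : 0 < ∑ i : Fin n, down1 k μ i * x i := by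
          obtain ⟨i, -, hi⟩ := Finset.exists_lt_of_sum_lt
            (f := fun _ : Fin n => (0:ℝ)) (g := fun i => down1 k μ i * z i ^ (1/α))
            (by simpa only [Finset.sum_const_zero] using hpos)
          have hpi : 0 < down1 k μ i := by
            rcases (hp0 i).eq_or_lt with h | h
            · exfalso; rw [← h] at hi; simp at hi
            · exact h
          exact Finset.sum_pos' (fun j _ => mul_nonneg (hp0 j) (hxpos j).le)
            ⟨i, Finset.mem_univ i, mul_pos hpi (hxpos i)⟩
        have hmono : genPoly μ z ≤ genPoly μ (fun i => z i + ε) := by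
          unfold genPoly
          refine Finset.sum_le_sum fun S _ => ?_
          refine mul_le_mul_of_nonneg_left ?_ (hμ0 S)
          exact Finset.prod_le_prod (fun i _ => hz i) (fun i _ => by linarith)
        calc genPoly μ z ≤ genPoly μ (fun i => z i + ε) := hmono
          _ = genPoly μ (fun i => x i ^ α) := by rw [hxα]
          _ ≤ (∑ i : Fin n, down1 k μ i * x i) ^ (α * (k:ℝ)) :=
              core_ineq n k α hα0 μ hμ0 hμk hμ1 hFLC hk x hxpos hxs
      have hinner : Continuous (fun ε : ℝ => ∑ i : Fin n, down1 k μ i * (z i + ε) ^ (1/α)) := by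
        refine continuous_finset_sum _ fun i _ => Continuous.mul continuous_const ?_
        exact (Real.continuous_rpow_const (by positivity)).comp (continuous_const.add continuous_id)
      have hcont : ContinuousAt
          (fun ε : ℝ => (∑ i : Fin n, down1 k μ i * (z i + ε) ^ (1/α)) ^ (α * (k:ℝ))) 0 := by
        refine ContinuousAt.rpow_const hinner.continuousAt (Or.inl ?_)
        simp only [add_zero]
        exact hpos.ne'
      have htend : Filter.Tendsto
          (fun ε : ℝ => (∑ i : Fin n, down1 k μ i * (z i + ε) ^ (1/α)) ^ (α * (k:ℝ)))
          (𝓝[>] (0:ℝ)) (𝓝 (s0 ^ (α * (k:ℝ)))) := by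
        have h2 := hcont.tendsto.mono_left (nhdsWithin_le_nhds (s := Set.Ioi (0:ℝ)))
        convert h2 using 2
        simp [hs0]
      exact ge_of_tendsto htend
        (Filter.eventually_of_mem self_mem_nhdsWithin (fun ε hε => key ε hε))
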